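/- Let F be a finite field with q elements, let m ≥ 1, let d ≥ 1 be an integer with d ≤ q, and let ε ∈ (0, 1] satisfy (d − 1)/q ≤ ε/2. Let C_in : F → (Fin N_in → {0,1}) be a map such that for all distinct a ≠ b ∈ F, hammingDist(C_in(a), C_in(b)) ≥ (1/2 − ε/2)·N_in. For a polynomial p in m variables over F of total degree at most d − 1, define its concatenated encoding Enc(p) : F^m × Fin N_in → {0,1} by Enc(p)(v, t) = C_in(p(v))_t. Then for all distinct polynomials p₁ ≠ p₂ in m variables over F, each of total degree at most d − 1, hammingDist(Enc(p₁), Enc(p₂)) ≥ (1/2 − ε)·q^m·N_in. -/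

import Mathlib

open Finset MvPolynomial

/-- Schwartz–Zippel: the number of zeros of a nonzero `m`-variate polynomial
over a finite field, times `q`, is at most `totalDegree * q ^ m`. -/
theorem schwartz_zippel_aux {F : Type*} [Field F] [Fintype F] [DecidableEq F] :
    ∀ (m : ℕ) (p : MvPolynomial (Fin m) F), p ≠ 0 →
      (Finset.univ.filter fun v : Fin m → F => MvPolynomial.eval v p = 0).card
          * Fintype.card F
        ≤ p.totalDegree * (Fintype.card F) ^ m := by
  intro m
  induction m with
  | zero =>
      intro p hp
      have h0 : (Finset.univ.filter fun v : Fin 0 → F => MvPolynomial.eval v p = 0) = ∅ := by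
        refine Finset.filter_false_of_mem fun v _ => ?_
        intro hz
        apply hp
        apply (MvPolynomial.isEmptyAlgEquiv F (Fin 0)).injective
        rw [map_zero]
        have hv : v = (isEmptyElim : Fin 0 → F) := funext fun i => i.elim0
        have he : MvPolynomial.eval v p = (MvPolynomial.isEmptyAlgEquiv F (Fin 0)) p := by
          have hext : (MvPolynomial.eval v : MvPolynomial (Fin 0) F →+* F)
              = ((MvPolynomial.isEmptyAlgEquiv F (Fin 0)).toRingEquiv : MvPolynomial (Fin 0) F →+* F) :=
            MvPolynomial.ringHom_ext (fun a => by
              show MvPolynomial.eval v (MvPolynomial.C a) = (MvPolynomial.isEmptyAlgEquiv F (Fin 0)) (MvPolynomial.C a)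
              rw [MvPolynomial.eval_C, ← MvPolynomial.algebraMap_eq, AlgEquiv.commutes]; rfl) (fun i => i.elim0)
          exact congrArg (fun f : MvPolynomial (Fin 0) F →+* F => f p) hext
        rw [← he]; exact hz
      rw [h0]
      simp
  | succ m ih =>
      intro p hp
      set q := Fintype.card F with hq
      set p' := MvPolynomial.finSuccEquiv F m p with hp'def
      have hp' : p' ≠ 0 := by
        intro h
        apply hp
        apply (MvPolynomial.finSuccEquiv F m).injective
        rw [map_zero]; exact h
      set n := p'.natDegree with hn
      set c := p'.coeff n with hc
      have hcne : c ≠ 0 := by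
        simpa [hc, hn] using Polynomial.leadingCoeff_ne_zero.mpr hp'
      -- fiberwise count over the tail
      have hfib : ∀ s : Fin m → F,
          (Finset.univ.filter fun v : Fin (m+1) → F =>
              MvPolynomial.eval v p = 0 ∧ Fin.tail v = s).card
            = (Finset.univ.filter fun y : F =>
                (Polynomial.map (MvPolynomial.eval s) p').eval y = 0).card := by
        intro s
        refine Finset.card_bij' (fun v _ => v 0) (fun y _ => Fin.cons y s) ?_ ?_ ?_ ?_
        · intro v hv
          simp only [Finset.mem_filter, Finset.mem_univ, true_and] at hv ⊢
          obtain ⟨hv1, hv2⟩ := hv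
          have heval := MvPolynomial.eval_eq_eval_mv_eval' (Fin.tail v) (v 0) p
          rw [Fin.cons_self_tail] at heval
          rw [← hp'def] at heval
          rw [← hv2, ← heval]
          exact hv1
        · intro y hy
          simp only [Finset.mem_filter, Finset.mem_univ, true_and] at hy ⊢
          constructor
          · rw [MvPolynomial.eval_eq_eval_mv_eval' s y p, ← hp'def]; exact hy
          · simp
        · intro v hv
          simp only [Finset.mem_filter, Finset.mem_univ, true_and] at hv
          show Fin.cons (v 0) s = v
          rw [← hv.2]
          exact Fin.cons_self_tail v
        · intro y hy
          simp
      -- per-fiber bound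
      have hbound : ∀ s : Fin m → F,
          (Finset.univ.filter fun y : F =>
              (Polynomial.map (MvPolynomial.eval s) p').eval y = 0).card
            ≤ if MvPolynomial.eval s c = 0 then q else n := by
        intro s
        split_ifs with hsc
        · calc _ ≤ (Finset.univ : Finset F).card := Finset.card_filter_le _ _
            _ = q := Finset.card_univ
        · set Q := Polynomial.map (MvPolynomial.eval s) p' with hQ
          have hQne : Q ≠ 0 := fun h => hsc (by
            have := Polynomial.coeff_map (MvPolynomial.eval s) n (p := p')
            rw [← hQ, h] at this
            simpa [hc] using this.symm)
          have hsub : (Finset.univ.filter fun y : F => Q.eval y = 0) ⊆ Q.roots.toFinset := by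
            intro y hy
            simp only [Finset.mem_filter, Finset.mem_univ, true_and] at hy
            simp [Multiset.mem_toFinset, Polynomial.mem_roots, hQne, Polynomial.IsRoot, hy]
          calc (Finset.univ.filter fun y : F => Q.eval y = 0).card
              ≤ Q.roots.toFinset.card := Finset.card_le_card hsub
            _ ≤ Multiset.card Q.roots := Q.roots.toFinset_card_le
            _ ≤ Q.natDegree := Polynomial.card_roots' Q
            _ ≤ n := Polynomial.natDegree_map_le
      -- total count
      have hcount : (Finset.univ.filter fun v : Fin (m+1) → F =>
            MvPolynomial.eval v p = 0).card
          ≤ (Finset.univ.filter fun s : Fin m → F => MvPolynomial.eval s c = 0).card * q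
            + q ^ m * n := by
        have hsplit : (Finset.univ.filter fun v : Fin (m+1) → F =>
              MvPolynomial.eval v p = 0).card
            = ∑ s : Fin m → F,
                (Finset.univ.filter fun v : Fin (m+1) → F =>
                  MvPolynomial.eval v p = 0 ∧ Fin.tail v = s).card := by
          rw [Finset.card_eq_sum_card_fiberwise
            (f := fun v : Fin (m+1) → F => Fin.tail v) (t := Finset.univ)
            (fun v _ => Finset.mem_univ _)]
          refine Finset.sum_congr rfl fun s _ => ?_
          congr 1
          ext v
          simp [Finset.mem_filter, and_assoc]
        rw [hsplit]
        calc ∑ s : Fin m → F, (Finset.univ.filter fun v : Fin (m+1) → F =>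
                MvPolynomial.eval v p = 0 ∧ Fin.tail v = s).card
            ≤ ∑ s : Fin m → F, (if MvPolynomial.eval s c = 0 then q else n) := by
              refine Finset.sum_le_sum fun s _ => ?_
              rw [hfib s]; exact hbound s
          _ = (Finset.univ.filter fun s : Fin m → F => MvPolynomial.eval s c = 0).card * q
              + (Finset.univ.filter fun s : Fin m → F => ¬ MvPolynomial.eval s c = 0).card * n := by
              rw [Finset.sum_ite, Finset.sum_const, Finset.sum_const, smul_eq_mul, smul_eq_mul]
          _ ≤ _ := by
              gcongr
              calc (Finset.univ.filter fun s : Fin m → F => ¬ MvPolynomial.eval s c = 0).card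
                  ≤ (Finset.univ : Finset (Fin m → F)).card := Finset.card_filter_le _ _
                _ = q ^ m := by simp [hq, Fintype.card_fun]
      have ihc := ih c hcne
      have hdeg : c.totalDegree + n ≤ p.totalDegree :=
        MvPolynomial.totalDegree_coeff_finSuccEquiv_add_le p n (by simpa [hc] using hcne)
      calc (Finset.univ.filter fun v : Fin (m+1) → F =>
              MvPolynomial.eval v p = 0).card * q
          ≤ ((Finset.univ.filter fun s : Fin m → F => MvPolynomial.eval s c = 0).card * q
              + q ^ m * n) * q := by exact Nat.mul_le_mul_right q hcount
        _ = (Finset.univ.filter fun s : Fin m → F =>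
              MvPolynomial.eval s c = 0).card * q * q + n * q ^ (m+1) := by ring
        _ ≤ c.totalDegree * q ^ m * q + n * q ^ (m+1) := by
            gcongr
        _ = (c.totalDegree + n) * q ^ (m+1) := by ring
        _ ≤ p.totalDegree * q ^ (m+1) := Nat.mul_le_mul_right _ hdeg


/-- **Distance of the concatenated Reed–Muller code.**
Let `F` be a finite field with `q` elements, `m ≥ 1`, `1 ≤ d ≤ q`, `ε ∈ (0,1]`
with `(d−1)/q ≤ ε/2`, and let `C_in : F → {0,1}^{N_in}` have distance at least
`(1/2 − ε/2)·N_in`. Encoding an `m`-variate polynomial `p` of total degree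
`≤ d − 1` by `Enc(p)(v,t) = C_in (p(v)) t`, any two distinct such polynomials
have encodings at Hamming distance at least `(1/2 − ε)·q^m·N_in`. -/
theorem rm_concat_distance {F : Type*} [Field F] [Fintype F] [DecidableEq F]
    {m d N_in : ℕ} (hm : 1 ≤ m) (hd : 1 ≤ d) (hdq : d ≤ Fintype.card F)
    {ε : ℝ} (hε0 : 0 < ε) (hε1 : ε ≤ 1)
    (hdε : ((d : ℝ) - 1) / (Fintype.card F : ℝ) ≤ ε / 2)
    (C_in : F → Fin N_in → Bool)
    (hin : ∀ a b : F, a ≠ b →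
      ((1 : ℝ) / 2 - ε / 2) * N_in ≤ (hammingDist (C_in a) (C_in b) : ℝ))
    (p₁ p₂ : MvPolynomial (Fin m) F) (hne : p₁ ≠ p₂)
    (h₁ : p₁.totalDegree ≤ d - 1) (h₂ : p₂.totalDegree ≤ d - 1) :
    ((1 : ℝ) / 2 - ε) * (Fintype.card F : ℝ) ^ m * N_in ≤
      (hammingDist
        (fun vt : (Fin m → F) × Fin N_in => C_in (MvPolynomial.eval vt.1 p₁) vt.2)
        (fun vt : (Fin m → F) × Fin N_in => C_in (MvPolynomial.eval vt.1 p₂) vt.2) : ℝ) := by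

  classical
  set q := Fintype.card F with hq
  have hq0 : 0 < q := Fintype.card_pos
  have hq0' : (0:ℝ) < (q:ℝ) := by exact_mod_cast hq0
  set p := p₁ - p₂ with hpdef
  have hp : p ≠ 0 := sub_ne_zero.mpr hne
  have hpdeg : p.totalDegree ≤ d - 1 :=
    (MvPolynomial.totalDegree_sub p₁ p₂).trans (max_le h₁ h₂)
  set Z := Finset.univ.filter fun v : Fin m → F => MvPolynomial.eval v p = 0 with hZ
  set D := Finset.univ.filter fun v : Fin m → F =>
    MvPolynomial.eval v p₁ ≠ MvPolynomial.eval v p₂ with hD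
  -- Schwartz–Zippel bound on Z
  have hsz : Z.card * q ≤ (d - 1) * q ^ m :=
    (schwartz_zippel_aux m p hp).trans (Nat.mul_le_mul_right _ hpdeg)
  have hdm1 : ((d - 1 : ℕ) : ℝ) = (d : ℝ) - 1 := by
    push_cast [Nat.cast_sub hd]; ring
  have hZreal : (Z.card : ℝ) ≤ ε / 2 * (q : ℝ) ^ m := by
    have h1 : (Z.card : ℝ) * q ≤ ((d:ℝ) - 1) * (q:ℝ) ^ m := by
      rw [← hdm1]; exact_mod_cast hsz
    have h2 : (d:ℝ) - 1 ≤ ε / 2 * q := by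
      rw [div_le_iff₀ hq0'] at hdε; linarith
    have h3 : (Z.card : ℝ) * q ≤ ε / 2 * (q:ℝ) ^ m * q := by
      calc (Z.card : ℝ) * q ≤ ((d:ℝ) - 1) * (q:ℝ) ^ m := h1
        _ ≤ ε / 2 * q * (q:ℝ) ^ m := by
            have : (0:ℝ) ≤ (q:ℝ) ^ m := by positivity
            nlinarith
        _ = ε / 2 * (q:ℝ) ^ m * q := by ring
    exact le_of_mul_le_mul_right h3 hq0'
  -- D is the complement of Z
  have hDZ : D.card + Z.card = q ^ m := by
    have : D = Finset.univ.filter fun v : Fin m → F => ¬ MvPolynomial.eval v p = 0 := by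
      apply Finset.filter_congr
      intro v _
      simp [hpdef, sub_eq_zero]
    have hcards := Finset.card_filter_add_card_filter_not
      (s := (Finset.univ : Finset (Fin m → F))) (p := fun v => MvPolynomial.eval v p = 0)
    simp only [Finset.card_univ, Fintype.card_fun, Fintype.card_fin, ← hq] at hcards
    rw [this, hZ]
    omega
  have hDreal : (1 - ε / 2) * (q:ℝ) ^ m ≤ (D.card : ℝ) := by
    have : (D.card : ℝ) + Z.card = (q:ℝ) ^ m := by exact_mod_cast hDZ
    linarith
  -- hamming distance decomposes fiberwise
  have hsplit : (hammingDist
        (fun vt : (Fin m → F) × Fin N_in => C_in (MvPolynomial.eval vt.1 p₁) vt.2)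
        (fun vt : (Fin m → F) × Fin N_in => C_in (MvPolynomial.eval vt.1 p₂) vt.2))
      = ∑ v : Fin m → F,
          hammingDist (C_in (MvPolynomial.eval v p₁)) (C_in (MvPolynomial.eval v p₂)) := by
    show (Finset.univ.filter fun vt : (Fin m → F) × Fin N_in =>
          C_in (MvPolynomial.eval vt.1 p₁) vt.2 ≠ C_in (MvPolynomial.eval vt.1 p₂) vt.2).card
        = ∑ v : Fin m → F, (Finset.univ.filter fun t : Fin N_in =>
            C_in (MvPolynomial.eval v p₁) t ≠ C_in (MvPolynomial.eval v p₂) t).card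
    rw [Finset.card_eq_sum_card_fiberwise
      (f := fun vt : (Fin m → F) × Fin N_in => vt.1) (t := Finset.univ)
      (fun vt _ => Finset.mem_univ _)]
    refine Finset.sum_congr rfl fun v _ => ?_
    refine Finset.card_bij' (fun vt _ => vt.2) (fun t _ => (v, t)) ?_ ?_ ?_ ?_
    · intro vt hvt
      simp only [Finset.mem_filter, Finset.mem_univ, true_and] at hvt ⊢
      rw [← hvt.2]; exact hvt.1
    · intro t ht
      simp only [Finset.mem_filter, Finset.mem_univ, true_and] at ht ⊢
      simp [ht]
    · intro vt hvt
      simp only [Finset.mem_filter, Finset.mem_univ, true_and] at hvt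
      exact Prod.ext_iff.mpr ⟨hvt.2.symm, rfl⟩
    · intro t ht
      rfl
  have hNnn : (0:ℝ) ≤ ((1:ℝ)/2 - ε/2) * N_in := by
    have : (0:ℝ) ≤ (N_in : ℝ) := Nat.cast_nonneg _
    nlinarith
  have hlow : (D.card : ℝ) * (((1:ℝ)/2 - ε/2) * N_in) ≤
      ∑ v : Fin m → F,
        (hammingDist (C_in (MvPolynomial.eval v p₁)) (C_in (MvPolynomial.eval v p₂)) : ℝ) := by
    calc (D.card : ℝ) * (((1:ℝ)/2 - ε/2) * N_in)
        = ∑ _v ∈ D, ((1:ℝ)/2 - ε/2) * N_in := by rw [Finset.sum_const, nsmul_eq_mul]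
      _ ≤ ∑ v ∈ D,
          (hammingDist (C_in (MvPolynomial.eval v p₁)) (C_in (MvPolynomial.eval v p₂)) : ℝ) := by
          refine Finset.sum_le_sum fun v hv => ?_
          rw [hD, Finset.mem_filter] at hv
          exact hin _ _ hv.2
      _ ≤ _ := by
          refine Finset.sum_le_sum_of_subset_of_nonneg (Finset.subset_univ D) ?_
          intro v _ _
          positivity
  rw [hsplit]
  push_cast
  calc ((1:ℝ)/2 - ε) * (q:ℝ) ^ m * N_in
      ≤ ((1 - ε/2) * (q:ℝ)^m) * (((1:ℝ)/2 - ε/2) * N_in) := by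
        have hqm : (0:ℝ) ≤ (q:ℝ)^m := by positivity
        have hN : (0:ℝ) ≤ (N_in:ℝ) := Nat.cast_nonneg _
        nlinarith [mul_nonneg (mul_nonneg hqm hN) hε0.le,
          mul_nonneg (mul_nonneg hqm hN) (mul_nonneg hε0.le hε0.le)]
    _ ≤ (D.card : ℝ) * (((1:ℝ)/2 - ε/2) * N_in) := by
        exact mul_le_mul_of_nonneg_right hDreal hNnn
    _ ≤ _ := hlow
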